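/- Let u ≥ 1 and let a_1, a_2, …, a_m be a sequence of integers with 0 ≤ a_i < 2^u for all i and a_i ≠ a_{i+1} for all i ∈ [1..m). Define b_i = vbit(a_i, a_{i+1}) for i ∈ [1..m). Then b_i ≠ b_{i+1} for all i ∈ [1..m−1), and 0 ≤ b_i < 2u for all i ∈ [1..m). -/

import Mathlib

/-- `lbit x y`: index of the lowest bit in which the binary representations of
`x` and `y` differ (meaningful when `x ≠ y`); it is the 2-adic valuation of `x XOR y`. -/
def lbit (x y : ℕ) : ℕ := padicValNat 2 (x ^^^ y)

/-- `vbit x y = 2 * lbit x y + a` where `a` is the bit of `x` with index `lbit x y`. -/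
def vbit (x y : ℕ) : ℕ := 2 * lbit x y + (if x.testBit (lbit x y) then 1 else 0)

lemma xor_ne_zero' {x y : ℕ} (h : x ≠ y) : x ^^^ y ≠ 0 := by
  intro h0; exact h (xor_eq_zero_iff.mp h0)

lemma testBit_lbit {x y : ℕ} (h : x ≠ y) : (x ^^^ y).testBit (lbit x y) = true := by
  have hn : x ^^^ y ≠ 0 := xor_ne_zero' h
  set n := x ^^^ y
  have hfac : n.factorization 2 = lbit x y := (Nat.factorization_def n Nat.prime_two).symm
  have hnd : ¬ 2 ∣ n / 2 ^ lbit x y := by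
    rw [← hfac]; exact Nat.not_dvd_ordCompl Nat.prime_two hn
  have h1 : n / 2 ^ lbit x y % 2 = 1 := Nat.two_dvd_ne_zero.mp hnd
  simp [Nat.testBit_eq_decide_div_mod_eq, h1]

lemma testBit_ne_of_ne {x y : ℕ} (h : x ≠ y) :
    x.testBit (lbit x y) ≠ y.testBit (lbit x y) := by
  have := testBit_lbit h
  rw [Nat.testBit_xor] at this
  intro he
  rw [he] at this
  simp at this

lemma lbit_symm (x y : ℕ) : lbit x y = lbit y x := by
  unfold lbit; rw [Nat.xor_comm]

lemma lbit_lt {x y u : ℕ} (hx : x < 2 ^ u) (hy : y < 2 ^ u) (h : x ≠ y) :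
    lbit x y < u := by
  have hn : x ^^^ y ≠ 0 := xor_ne_zero' h
  have hlt : x ^^^ y < 2 ^ u := Nat.xor_lt_two_pow hx hy
  have hdvd : 2 ^ lbit x y ∣ x ^^^ y := pow_padicValNat_dvd
  have h1 : 2 ^ lbit x y ≤ x ^^^ y := Nat.le_of_dvd (Nat.pos_of_ne_zero hn) hdvd
  have := lt_of_le_of_lt h1 hlt
  exact (Nat.pow_lt_pow_iff_right (by norm_num)).mp this

lemma vbit_ne {x y z : ℕ} (hxy : x ≠ y) (hyz : y ≠ z) : vbit x y ≠ vbit y z := by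
  intro h
  have hd := testBit_ne_of_ne hxy
  unfold vbit at h
  by_cases hb1 : x.testBit (lbit x y) <;> by_cases hb2 : y.testBit (lbit y z) <;>
    simp only [hb1, hb2, Bool.false_eq_true, if_true, if_false] at h
  · have hk : lbit x y = lbit y z := by omega
    rw [hk] at hd hb1
    exact hd (hb1.trans hb2.symm)
  · omega
  · omega
  · have hk : lbit x y = lbit y z := by omega
    rw [hk] at hd hb1
    simp only [Bool.not_eq_true] at hb1 hb2
    exact hd (hb1.trans hb2.symm)

/-- Cole–Vishkin bit reduction: if `a₁, …, a_m ∈ [0..2^u)` with adjacent elements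
distinct, then `b_i = vbit (a_i) (a_{i+1})` (for `i ∈ [1..m)`) has adjacent elements
distinct and `b_i ∈ [0..2u)`. -/
theorem stmt3 (u m : ℕ) (hu : 1 ≤ u) (a : ℕ → ℕ)
    (hbound : ∀ i, 1 ≤ i → i ≤ m → a i < 2 ^ u)
    (hadj : ∀ i, 1 ≤ i → i < m → a i ≠ a (i + 1)) :
    (∀ i, 1 ≤ i → i + 1 < m →
        vbit (a i) (a (i + 1)) ≠ vbit (a (i + 1)) (a (i + 2))) ∧
    (∀ i, 1 ≤ i → i < m → vbit (a i) (a (i + 1)) < 2 * u) := by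
  constructor
  · intro i h1 h2
    exact vbit_ne (hadj i h1 (by omega)) (hadj (i + 1) (by omega) (by omega))
  · intro i h1 h2
    have hne := hadj i h1 h2
    have hl : lbit (a i) (a (i + 1)) < u :=
      lbit_lt (hbound i h1 (by omega)) (hbound (i + 1) (by omega) (by omega)) hne
    unfold vbit
    split_ifs <;> omega
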